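/- Let n be an even positive integer and m a positive integer. Then m³ divides S_n(m) if and only if m² divides B_n, where S_n(m) = Σ_{ν=0}^{m-1} ν^n and divisibility of B_n by m² means ord_p(B_n) ≥ 2·ord_p(m) for all primes p | m. -/

import Mathlib

set_option linter.unusedSectionVars false
set_option linter.unusedVariables false
set_option maxHeartbeats 1000000


open Finset

namespace CubeAux

variable {p : ℕ} [hp : Fact p.Prime]

/-- `p`-adic valuation of `x` is at least `c` (with `x = 0` allowed). -/
def VGE (p : ℕ) (c : ℤ) (x : ℚ) : Prop := x = 0 ∨ c ≤ padicValRat p x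

lemma vge_zero (c : ℤ) : VGE p c 0 := Or.inl rfl

lemma vge_mono {c c' : ℤ} (h : c' ≤ c) {x : ℚ} (hx : VGE p c x) : VGE p c' x :=
  hx.imp id (le_trans h)

lemma vge_neg {c : ℤ} {x : ℚ} (hx : VGE p c x) : VGE p c (-x) := by
  rcases hx with h | h
  · simp [h, vge_zero]
  · exact Or.inr (by rwa [padicValRat.neg])

lemma vge_add {c : ℤ} {x y : ℚ} (hx : VGE p c x) (hy : VGE p c y) : VGE p c (x + y) := by
  rcases hx with rfl | hx
  · simpa using hy
  rcases hy with rfl | hy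
  · rw [add_zero]; exact Or.inr hx
  rcases eq_or_ne (x + y) 0 with h | h
  · exact Or.inl h
  · exact Or.inr (le_trans (le_min hx hy) (padicValRat.min_le_padicValRat_add h))

lemma vge_sub {c : ℤ} {x y : ℚ} (hx : VGE p c x) (hy : VGE p c y) : VGE p c (x - y) := by
  rw [sub_eq_add_neg]; exact vge_add hx (vge_neg hy)

lemma vge_sum {α : Type*} {c : ℤ} {s : Finset α} {f : α → ℚ}
    (h : ∀ a ∈ s, VGE p c (f a)) : VGE p c (∑ a ∈ s, f a) := by
  classical
  induction s using Finset.induction_on with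
  | empty => simpa using vge_zero c
  | insert _ _ hnm ih =>
      rw [Finset.sum_insert hnm]
      exact vge_add (h _ (Finset.mem_insert_self _ _))
        (ih fun a ha => h a (Finset.mem_insert_of_mem ha))

lemma vge_mul {c d : ℤ} {x y : ℚ} (hx : VGE p c x) (hy : VGE p d y) : VGE p (c + d) (x * y) := by
  rcases eq_or_ne x 0 with rfl | hx0
  · simp [vge_zero]
  rcases eq_or_ne y 0 with rfl | hy0
  · simp [vge_zero]
  rcases hx with h | h; · exact absurd h hx0
  rcases hy with h' | h'; · exact absurd h' hy0
  exact Or.inr (by rw [padicValRat.mul hx0 hy0]; exact add_le_add h h')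

lemma vge_int (z : ℤ) : VGE p 0 ((z : ℚ)) := by
  rcases eq_or_ne z 0 with rfl | hz
  · simp [vge_zero]
  · exact Or.inr (by rw [padicValRat.of_int]; exact Int.ofNat_nonneg _)

lemma vge_nat (a : ℕ) : VGE p 0 ((a : ℚ)) := by
  exact_mod_cast vge_int (a : ℤ)

lemma val_nat (a : ℕ) (ha : a ≠ 0) : padicValRat p (a : ℚ) = padicValNat p a := by
  rw [show ((a : ℚ)) = ((a : ℤ) : ℚ) by push_cast; ring, padicValRat.of_int, padicValInt.of_nat]

lemma vge_div_nat {c : ℤ} {x : ℚ} (hx : VGE p c x) (j : ℕ) (hj : j ≠ 0) :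
    VGE p (c - padicValNat p j) (x / j) := by
  rcases eq_or_ne x 0 with rfl | hx0
  · simp [vge_zero]
  rcases hx with h | h; · exact absurd h hx0
  refine Or.inr ?_
  rw [padicValRat.div hx0 (by exact_mod_cast hj), val_nat (p := p) j hj]
  omega

/-- dominant-term lemma: if `x` has valuation strictly below `c` and `y` has valuation
at least `c`, then `x + y` is nonzero with the valuation of `x`. -/
lemma val_add_eq {c : ℤ} {x y : ℚ} (hx0 : x ≠ 0) (hy : VGE p c y)
    (hlt : padicValRat p x < c) :
    x + y ≠ 0 ∧ padicValRat p (x + y) = padicValRat p x := by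
  rcases hy with rfl | hy
  · simpa using hx0
  rcases eq_or_ne y 0 with rfl | hy0
  · simpa using hx0
  have hvlt : padicValRat p x < padicValRat p y := lt_of_lt_of_le hlt hy
  have hne : x + y ≠ 0 := by
    intro h
    have : y = -x := by linarith [h]
    rw [this, padicValRat.neg] at hvlt
    exact lt_irrefl _ hvlt
  exact ⟨hne, padicValRat.add_eq_of_lt hne hx0 hy0 hvlt⟩


lemma add_le_pow : ∀ (b e k : ℕ), 2 ≤ b → e + k ≤ b ^ e → e + 1 + k ≤ b ^ (e + 1) := by
  intro b e k hb h
  rw [pow_succ]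
  nlinarith [pow_pos (by omega : 0 < b) e]

lemma add2_le_two_pow : ∀ e, 2 ≤ e → e + 2 ≤ 2 ^ e := by
  intro e
  induction e with
  | zero => omega
  | succ k ih =>
    intro h
    rcases Nat.lt_or_ge k 2 with h' | h'
    · interval_cases k
      · omega
      · norm_num
    · exact add_le_pow 2 k 2 (by norm_num) (ih h')

lemma add3_le_five_pow : ∀ e, 1 ≤ e → e + 3 ≤ 5 ^ e := by
  intro e
  induction e with
  | zero => omega
  | succ k ih =>
    intro h
    rcases Nat.lt_or_ge k 1 with h' | h'
    · interval_cases k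
      norm_num
    · exact add_le_pow 5 k 3 (by norm_num) (ih h')

lemma add4_le_two_pow : ∀ e, 3 ≤ e → e + 4 ≤ 2 ^ e := by
  intro e
  induction e with
  | zero => omega
  | succ k ih =>
    intro h
    rcases Nat.lt_or_ge k 3 with h' | h'
    · interval_cases k <;> omega
    · exact add_le_pow 2 k 4 (by norm_num) (ih h')

section Jlemmas

variable {p j : ℕ}

lemma self_fac (hp : p.Prime) (hj0 : j ≠ 0) :
    p ^ padicValNat p j * (j / p ^ padicValNat p j) = j :=
  Nat.mul_div_cancel' pow_padicValNat_dvd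

lemma not_dvd_quot (hp : p.Prime) (hj0 : j ≠ 0) :
    ¬ p ∣ j / p ^ padicValNat p j := by
  haveI : Fact p.Prime := ⟨hp⟩
  rintro ⟨s, hs⟩
  have hfac := self_fac hp hj0
  have hd : p ^ (padicValNat p j + 1) ∣ j := by
    refine ⟨s, ?_⟩
    calc j = p ^ padicValNat p j * (p * s) := by rw [← hs, hfac]
    _ = p ^ (padicValNat p j + 1) * s := by ring
  rw [padicValNat_dvd_iff_le hj0] at hd
  omega

/-- J2 : `v_p(j) + 2 ≤ j` for `j ≥ 3`. -/
lemma J2 (hp : p.Prime) (hj : 3 ≤ j) : padicValNat p j + 2 ≤ j := by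
  have hj0 : j ≠ 0 := by omega
  have h2 : 2 ≤ p := hp.two_le
  have hle : p ^ padicValNat p j ≤ j := Nat.le_of_dvd (by omega) pow_padicValNat_dvd
  by_cases h1 : padicValNat p j ≤ 1
  · omega
  · have ha : 2 ^ padicValNat p j ≤ p ^ padicValNat p j := Nat.pow_le_pow_left h2 _
    have hb := add2_le_two_pow (padicValNat p j) (by omega)
    omega

/-- J3 : `v_p(j) + 3 ≤ j` for `j ≥ 3`, `p ≥ 5`. -/
lemma J3 (hp : p.Prime) (hp5 : 5 ≤ p) (hj : 3 ≤ j) : padicValNat p j + 3 ≤ j := by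
  have hj0 : j ≠ 0 := by omega
  have hle : p ^ padicValNat p j ≤ j := Nat.le_of_dvd (by omega) pow_padicValNat_dvd
  by_cases h1 : padicValNat p j = 0
  · omega
  · have ha : 5 ^ padicValNat p j ≤ p ^ padicValNat p j := Nat.pow_le_pow_left hp5 _
    have hb := add3_le_five_pow (padicValNat p j) (by omega)
    omega

/-- J4 : `v_p(j) + 4 ≤ j` for `j ≥ 4` except `p = 2, j = 4`. -/
lemma J4 (hp : p.Prime) (hj : 4 ≤ j) (hne : ¬(p = 2 ∧ j = 4)) :
    padicValNat p j + 4 ≤ j := by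
  have hj0 : j ≠ 0 := by omega
  have h2 : 2 ≤ p := hp.two_le
  have hfac := self_fac hp hj0
  have hnd := not_dvd_quot hp hj0
  have hle : p ^ padicValNat p j ≤ j := Nat.le_of_dvd (by omega) pow_padicValNat_dvd
  by_cases hp5 : 5 ≤ p
  · by_cases h1 : padicValNat p j = 0
    · omega
    · have ha : 5 ^ padicValNat p j ≤ p ^ padicValNat p j := Nat.pow_le_pow_left hp5 _
      have hb := add3_le_five_pow (padicValNat p j) (by omega)
      -- need +4 : since v ≥ 1 ⇒ j ≥ 5^v ≥ v + ... redo with stronger bound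
      have hc : padicValNat p j + 4 ≤ 5 ^ padicValNat p j + 1 := by omega
      have hd : ∀ e, 1 ≤ e → e + 4 ≤ 5 ^ e := by
        intro e
        induction e with
        | zero => omega
        | succ k ih =>
          intro h
          rcases Nat.lt_or_ge k 1 with h' | h'
          · interval_cases k; norm_num
          · exact add_le_pow 5 k 4 (by norm_num) (ih h')
      have := hd (padicValNat p j) (by omega)
      omega
  · have hp23 : p = 2 ∨ p = 3 := by
      interval_cases p
      · exact Or.inl rfl
      · exact Or.inr rfl
      · exact absurd hp (by norm_num)
    by_cases h0 : padicValNat p j = 0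
    · omega
    by_cases h3 : 3 ≤ padicValNat p j
    · have ha : 2 ^ padicValNat p j ≤ p ^ padicValNat p j := Nat.pow_le_pow_left h2 _
      have hb := add4_le_two_pow (padicValNat p j) h3
      omega
    -- now v = 1 or 2
    by_cases h1 : padicValNat p j = 1
    · rw [h1, pow_one] at hfac hnd
      rcases hp23 with rfl | rfl <;> omega
    · have h2v : padicValNat p j = 2 := by omega
      rw [h2v] at hfac hnd
      rcases hp23 with rfl | rfl
      · have hne4 : j ≠ 4 := fun hj4 => hne ⟨rfl, hj4⟩
        norm_num at hfac hnd
        omega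
      · norm_num at hfac hnd
        omega

end Jlemmas

lemma bern_odd_zero {i : ℕ} (h : Odd i) (h1 : 1 < i) : bernoulli i = 0 := by
  rw [bernoulli_eq_bernoulli'_of_ne_one (by omega)]
  exact bernoulli'_eq_zero_of_odd h h1

/-- Rewrite a Faulhaber term. -/
lemma term_rewrite (n i : ℕ) (hi : i ≤ n) (x : ℚ) :
    bernoulli i * ((n + 1).choose i : ℚ) * x / ((n : ℚ) + 1) =
      bernoulli i * (n.choose i : ℚ) * x / ((n + 1 - i : ℕ) : ℚ) := by
  have h1 : ((n : ℚ) + 1) ≠ 0 := by positivity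
  have hj : (0 : ℚ) < ((n + 1 - i : ℕ) : ℚ) := by
    have : 1 ≤ n + 1 - i := by omega
    exact_mod_cast Nat.lt_of_lt_of_le Nat.zero_lt_one this
  have key : ((n.choose i : ℚ)) * ((n : ℚ) + 1) =
      ((n + 1).choose i : ℚ) * ((n + 1 - i : ℕ) : ℚ) := by
    have := Nat.choose_mul_succ_eq n i
    exact_mod_cast congrArg (Nat.cast (R := ℚ)) this
  rw [div_eq_div_iff h1 (ne_of_gt hj)]
  linear_combination (-(bernoulli i * x)) * key

end CubeAux
namespace CubeAux

variable {p : ℕ} [hp : Fact p.Prime]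

/-- the `i`-th Faulhaber term for `∑_{k<N} k^n`. -/
noncomputable def term (N n i : ℕ) : ℚ :=
  bernoulli i * (n.choose i : ℚ) * (N : ℚ) ^ (n + 1 - i) / ((n + 1 - i : ℕ) : ℚ)

lemma faul (N n : ℕ) : ∑ k ∈ range N, (k : ℚ) ^ n = ∑ i ∈ range (n + 1), term N n i := by
  rw [sum_range_pow]
  refine Finset.sum_congr rfl fun i hi => ?_
  rw [mem_range] at hi
  exact term_rewrite n i (by omega) ((N : ℚ) ^ (n + 1 - i))

lemma term_self (N n : ℕ) : term N n n = bernoulli n * N := by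
  simp [term, Nat.add_sub_cancel_left, pow_one]

/-- integer power sum. -/
def SqNat (N n : ℕ) : ℕ := ∑ k ∈ range N, k ^ n

lemma sqNat_cast (N n : ℕ) : ((SqNat N n : ℚ)) = ∑ k ∈ range N, (k : ℚ) ^ n := by
  unfold SqNat; push_cast; ring

lemma sqNat_pos {N : ℕ} (hN : 2 ≤ N) (n : ℕ) : 0 < SqNat N n := by
  have h1 : 1 ∈ range N := by simp; omega
  calc 0 < 1 ^ n := by norm_num
  _ ≤ SqNat N n := Finset.single_le_sum (f := fun k => k ^ n) (fun i _ => Nat.zero_le _) h1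

lemma faul_p (n : ℕ) : (SqNat p n : ℚ) = (∑ i ∈ range n, term p n i) + bernoulli n * p := by
  rw [sqNat_cast, faul p n, Finset.sum_range_succ, term_self]

/-- valuation of a cast prime power -/
lemma val_p_pow (j : ℕ) : padicValRat p ((p : ℚ) ^ j) = j := by
  have hp0 : ((p : ℚ)) ≠ 0 := by
    exact_mod_cast hp.out.ne_zero
  rw [padicValRat.pow, padicValRat.self hp.out.one_lt, mul_one]

lemma vge_N_pow (N : ℕ) (hN : N ≠ 0) (j : ℕ) :
    VGE p (j * padicValNat p N) ((N : ℚ) ^ j) := by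
  refine Or.inr ?_
  have hN0 : ((N : ℚ)) ≠ 0 := by exact_mod_cast hN
  rw [padicValRat.pow, val_nat (p := p) N hN]

lemma vge_B1 : VGE p (-1) (bernoulli 1) := by
  rw [bernoulli_one]
  have h2 : ((2 : ℚ)) ≠ 0 := by norm_num
  have : padicValRat p (-1 / 2) = -(padicValNat p 2 : ℤ) := by
    rw [padicValRat.div (by norm_num) h2, padicValRat.neg, padicValRat.one]
    rw [show ((2:ℚ)) = ((2:ℕ):ℚ) by norm_num, val_nat (p := p) 2 (by norm_num)]
    ring
  refine Or.inr ?_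
  rw [this]
  have : padicValNat p 2 ≤ 1 := by
    by_cases hp2 : p = 2
    · subst hp2; rw [padicValNat.self (by norm_num)]
    · rw [padicValNat.eq_zero_of_not_dvd]
      · omega
      · intro hd
        exact hp2 ((Nat.prime_dvd_prime_iff_eq hp.out (by norm_num)).1 hd)
  omega

/-- generic valuation bound for one term with denominator bound. -/
lemma term_vge {N n i : ℕ} (hN : N ≠ 0) (hi : i ≤ n) (c : ℤ)
    (hB : VGE p (-1) (bernoulli i))
    (hbound : c ≤ -1 + (n + 1 - i : ℕ) * (padicValNat p N : ℤ) - padicValNat p (n + 1 - i)) :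
    VGE p c (term N n i) := by
  have h1 : VGE p (-1 + 0) (bernoulli i * (n.choose i : ℚ)) := vge_mul hB (vge_nat _)
  have h2 : VGE p ((-1 + 0) + (n + 1 - i : ℕ) * (padicValNat p N : ℤ))
      (bernoulli i * (n.choose i : ℚ) * (N : ℚ) ^ (n + 1 - i)) :=
    vge_mul h1 (vge_N_pow N hN _)
  have h3 := vge_div_nat (p := p) h2 (n + 1 - i) (by omega)
  exact vge_mono (by omega) h3

/-- Tail bound for von Staudt–Clausen: each of the first `n` terms (for `N = p`)
has valuation ≥ 1, given the inductive hypothesis on Bernoulli numbers. -/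
lemma vsc_tail {n : ℕ} (hn2 : 2 ≤ n) (hne : Even n)
    (hIH : ∀ i < n, Even i → VGE p (-1) (bernoulli i)) :
    VGE p 1 (∑ i ∈ range n, term p n i) := by
  refine vge_sum fun i hi => ?_
  rw [mem_range] at hi
  by_cases hB0 : bernoulli i = 0
  · simp [term, hB0, vge_zero]
  by_cases hi1 : i = 1
  · subst hi1
    have hterm : term p n 1 = bernoulli 1 * (p : ℚ) ^ n := by
      unfold term
      have hn0 : ((n : ℚ)) ≠ 0 := by
        exact_mod_cast (by omega : n ≠ 0)
      rw [Nat.choose_one_right]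
      rw [show n + 1 - 1 = n from by omega]
      field_simp
    rw [hterm]
    have := vge_mul (p := p) vge_B1 (Or.inr (le_of_eq (val_p_pow n).symm))
    exact vge_mono (by omega) this
  · have hEven : Even i := by
      rcases Nat.even_or_odd i with h | h
      · exact h
      · rcases Nat.lt_or_ge i 2 with h2 | h2
        · interval_cases i
          · exact Even.zero
          · exact absurd rfl hi1
        · exact absurd (bern_odd_zero h (by omega)) hB0
    have hB := if hi0 : i = 0 then (by subst hi0; rw [bernoulli_zero]; exact Or.inr (by rw [padicValRat.one]; omega)) else hIH i hi hEven
    have hj3 : 3 ≤ n + 1 - i := by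
      obtain ⟨a, ha⟩ := hEven
      obtain ⟨b, hb⟩ := hne
      omega
    refine term_vge hp.out.ne_zero (by omega) 1 hB ?_
    have hJ := J2 hp.out hj3
    rw [padicValNat.self hp.out.one_lt]
    simp only [Nat.cast_one, mul_one]
    omega

lemma vge_of_mul_p {c : ℤ} {x : ℚ} (h : VGE p c (x * p)) : VGE p (c - 1) x := by
  have hp0 : ((p : ℚ)) ≠ 0 := by exact_mod_cast hp.out.ne_zero
  rcases eq_or_ne x 0 with rfl | hx0
  · exact vge_zero _
  rcases h with h | h
  · exact absurd h (by simp [hx0, hp0])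
  · refine Or.inr ?_
    rw [padicValRat.mul hx0 hp0, padicValRat.self hp.out.one_lt] at h
    omega

/-- weak von Staudt–Clausen: `v_p(B_i) ≥ -1`. -/
lemma vsc_weak : ∀ i, VGE p (-1) (bernoulli i) := by
  intro i
  induction i using Nat.strong_induction_on with
  | _ i IH =>
    rcases Nat.lt_or_ge i 2 with h2 | h2
    · interval_cases i
      · rw [bernoulli_zero]; exact Or.inr (by rw [padicValRat.one]; omega)
      · exact vge_B1
    rcases Nat.even_or_odd i with hEven | hOdd
    · -- use the Faulhaber identity
      have hfp := faul_p (p := p) i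
      have hSq : VGE p 0 ((SqNat p i : ℚ)) := vge_nat _
      have htail : VGE p 1 (∑ j ∈ range i, term p i j) :=
        vsc_tail h2 hEven (fun j hj _ => IH j hj)
      have : VGE p 0 (bernoulli i * p) := by
        have := vge_sub hSq (vge_mono (by omega) htail)
        rw [hfp] at this
        have heq : (∑ j ∈ range i, term p i j) + bernoulli i * ↑p -
            (∑ j ∈ range i, term p i j) = bernoulli i * p := by ring
        rwa [heq] at this
      simpa using vge_of_mul_p this
    · exact bern_odd_zero hOdd (by omega) ▸ vge_zero _

end CubeAux
namespace CubeAux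

variable {p : ℕ} [hp : Fact p.Prime]

lemma sum_range_cast_zmod {M : Type*} [AddCommMonoid M] (f : ZMod p → M) :
    ∑ k ∈ range p, f (k : ZMod p) = ∑ x : ZMod p, f x := by
  haveI : NeZero p := ⟨hp.out.ne_zero⟩
  refine Finset.sum_nbij' (i := fun k => ((k : ZMod p))) (j := fun x => x.val)
    (fun a _ => mem_univ _) (fun x _ => by rw [mem_range]; exact ZMod.val_lt x)
    (fun a ha => by rw [mem_range] at ha; exact ZMod.val_cast_of_lt ha)
    (fun x _ => ZMod.natCast_zmod_val x) (fun a _ => rfl)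

lemma sum_pow_zmod (n : ℕ) (hn : n ≠ 0) :
    ∑ x : ZMod p, x ^ n = if (p - 1) ∣ n then (-1 : ZMod p) else 0 := by
  by_cases hd : (p - 1) ∣ n
  · rw [if_pos hd]
    have h0 : (0 : ZMod p) ∈ (univ : Finset (ZMod p)) := mem_univ _
    rw [← Finset.sum_erase_add _ _ h0, zero_pow hn, add_zero]
    have hall : ∀ x ∈ univ.erase (0 : ZMod p), x ^ n = 1 := by
      intro x hx
      obtain ⟨c, hc⟩ := hd
      have hx0 : x ≠ 0 := (Finset.mem_erase.1 hx).1
      rw [hc, pow_mul, ZMod.pow_card_sub_one_eq_one hx0, one_pow]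
    rw [Finset.sum_congr rfl hall, Finset.sum_const, nsmul_eq_mul, mul_one]
    rw [Finset.card_erase_of_mem h0, Finset.card_univ, ZMod.card]
    have h2 : 2 ≤ p := hp.out.two_le
    rw [Nat.cast_sub (by omega), Nat.cast_one, ZMod.natCast_self, zero_sub]
  · rw [if_neg hd]
    have h2 : 2 ≤ p := hp.out.two_le
    set r := n % (p - 1) with hr
    have hr0 : r ≠ 0 := fun h => hd (Nat.dvd_of_mod_eq_zero h)
    have hrlt : r < p - 1 := Nat.mod_lt _ (by omega)
    have hpt : ∀ x : ZMod p, x ^ n = x ^ r := by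
      intro x
      rcases eq_or_ne x 0 with rfl | hx0
      · rw [zero_pow hn, zero_pow hr0]
      · conv_lhs => rw [← Nat.mod_add_div n (p - 1)]
        rw [pow_add, pow_mul, ZMod.pow_card_sub_one_eq_one hx0, one_pow, mul_one]
    rw [Finset.sum_congr rfl (fun x _ => hpt x)]
    exact FiniteField.sum_pow_lt_card_sub_one (K := ZMod p) r (by rw [ZMod.card]; exact hrlt)

lemma sq_cast_zmod (n : ℕ) (hn : n ≠ 0) :
    ((SqNat p n : ZMod p)) = if (p - 1) ∣ n then (-1 : ZMod p) else 0 := by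
  have h1 : ((SqNat p n : ZMod p)) = ∑ k ∈ range p, ((k : ZMod p)) ^ n := by
    unfold SqNat; push_cast; rfl
  rw [h1, sum_range_cast_zmod (f := fun x => x ^ n), sum_pow_zmod n hn]

lemma sq_val_zero {n : ℕ} (hd : (p - 1) ∣ n) (hn : n ≠ 0) :
    padicValNat p (SqNat p n) = 0 := by
  have hcast := sq_cast_zmod (p := p) n hn
  rw [if_pos hd] at hcast
  refine padicValNat.eq_zero_of_not_dvd fun hdvd => ?_
  rw [← ZMod.natCast_eq_zero_iff _ _] at hdvd
  rw [hcast] at hdvd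
  exact (neg_ne_zero.2 one_ne_zero) hdvd

lemma sq_dvd {n : ℕ} (hnd : ¬(p - 1) ∣ n) (hn : n ≠ 0) : p ∣ SqNat p n := by
  have hcast := sq_cast_zmod (p := p) n hn
  rw [if_neg hnd] at hcast
  exact (ZMod.natCast_eq_zero_iff _ _).1 hcast

/-- von Staudt–Clausen, exact part : if `(p-1) ∣ n` (`n` even positive) then
`v_p(B_n) = -1` (and in particular `B_n ≠ 0`). -/
lemma vsc_dvd {n : ℕ} (hn2 : 2 ≤ n) (hne : Even n) (hd : (p - 1) ∣ n) :
    bernoulli n ≠ 0 ∧ padicValRat p (bernoulli n) = -1 := by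
  have hfp := faul_p (p := p) n
  have htail : VGE p 1 (∑ i ∈ range n, term p n i) :=
    vsc_tail hn2 hne (fun i _ _ => vsc_weak i)
  have hSqne : SqNat p n ≠ 0 := (sqNat_pos hp.out.two_le n).ne'
  have hSqne' : ((SqNat p n : ℚ)) ≠ 0 := by exact_mod_cast hSqne
  have hv0 : padicValRat p ((SqNat p n : ℚ)) = 0 := by
    rw [val_nat _ hSqne, sq_val_zero hd (by omega)]
    simp
  have hBp : bernoulli n * p = (SqNat p n : ℚ) + (- ∑ i ∈ range n, term p n i) := by
    rw [hfp]; ring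
  obtain ⟨hne0, heq⟩ := val_add_eq (p := p) (c := 1) hSqne' (vge_neg htail)
    (by rw [hv0]; norm_num)
  rw [← hBp] at hne0 heq
  have hp0 : ((p : ℚ)) ≠ 0 := by exact_mod_cast hp.out.ne_zero
  have hB0 : bernoulli n ≠ 0 := fun h => hne0 (by simp [h])
  refine ⟨hB0, ?_⟩
  rw [padicValRat.mul hB0 hp0, padicValRat.self hp.out.one_lt, hv0] at heq
  omega

/-- von Staudt–Clausen, complementary part : if `(p-1) ∤ n` then `v_p(B_n) ≥ 0`. -/
lemma vsc_ndvd {n : ℕ} (hn1 : 1 ≤ n) (hnd : ¬(p - 1) ∣ n) : VGE p 0 (bernoulli n) := by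
  rcases Nat.lt_or_ge n 2 with h2 | h2
  · -- n = 1
    have hn : n = 1 := by omega
    subst hn
    have hp2 : p ≠ 2 := fun h => hnd (by simp [h])
    rw [bernoulli_one]
    refine Or.inr ?_
    have h2q : ((2 : ℚ)) ≠ 0 := by norm_num
    rw [show (-1/2 : ℚ) = -(1/2) by norm_num, padicValRat.neg,
      padicValRat.div (by norm_num) h2q, padicValRat.one,
      show ((2:ℚ)) = ((2:ℕ):ℚ) by norm_num, val_nat (p := p) 2 (by norm_num),
      padicValNat.eq_zero_of_not_dvd
        (fun hdd => hp2 ((Nat.prime_dvd_prime_iff_eq hp.out (by norm_num)).1 hdd))]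
    simp
  rcases Nat.even_or_odd n with hEven | hOdd
  · have hfp := faul_p (p := p) n
    have htail : VGE p 1 (∑ i ∈ range n, term p n i) :=
      vsc_tail h2 hEven (fun i _ _ => vsc_weak i)
    have hSqne : SqNat p n ≠ 0 := (sqNat_pos hp.out.two_le n).ne'
    have hSq1 : VGE p 1 ((SqNat p n : ℚ)) := by
      refine Or.inr ?_
      rw [val_nat _ hSqne]
      have := one_le_padicValNat_of_dvd hSqne (sq_dvd hnd (by omega))
      omega
    have hBp : VGE p 1 (bernoulli n * p) := by
      have := vge_sub hSq1 htail
      rw [hfp] at this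
      have heq : (∑ i ∈ range n, term p n i) + bernoulli n * ↑p -
          (∑ i ∈ range n, term p n i) = bernoulli n * p := by ring
      rwa [heq] at this
    simpa using vge_of_mul_p hBp
  · rw [bern_odd_zero hOdd (by omega)]
    exact vge_zero _

lemma bern_ne_zero {n : ℕ} (hn2 : 2 ≤ n) (hne : Even n) : bernoulli n ≠ 0 := by
  haveI : Fact (Nat.Prime 3) := ⟨by norm_num⟩
  exact (vsc_dvd (p := 3) hn2 hne (by simpa using hne.two_dvd)).1

end CubeAux
namespace CubeAux

variable {p : ℕ} [hp : Fact p.Prime]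

/-- Kummer tail bound : for `p ≥ 5`, each of the first `n` Faulhaber terms (`N = p`)
has valuation at least 2. -/
lemma kummer_tail {n : ℕ} (hp5 : 5 ≤ p) (hn6 : 6 ≤ n) (hne : Even n) :
    VGE p 2 (∑ i ∈ range n, term p n i) := by
  refine vge_sum fun i hi => ?_
  rw [mem_range] at hi
  by_cases hB0 : bernoulli i = 0
  · simp [term, hB0, vge_zero]
  by_cases hi1 : i = 1
  · subst hi1
    have hterm : term p n 1 = bernoulli 1 * (p : ℚ) ^ n := by
      unfold term
      have hn0 : ((n : ℚ)) ≠ 0 := by exact_mod_cast (by omega : n ≠ 0)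
      rw [Nat.choose_one_right, show n + 1 - 1 = n from by omega]
      field_simp
    rw [hterm]
    have := vge_mul (p := p) vge_B1 (Or.inr (le_of_eq (val_p_pow n).symm))
    exact vge_mono (by omega) this
  · have hEven : Even i := by
      rcases Nat.even_or_odd i with h | h
      · exact h
      · rcases Nat.lt_or_ge i 2 with h2' | h2'
        · interval_cases i
          · exact Even.zero
          · exact absurd rfl hi1
        · exact absurd (bern_odd_zero h (by omega)) hB0
    have hj3 : 3 ≤ n + 1 - i := by
      obtain ⟨a, ha⟩ := hEven
      obtain ⟨b, hb⟩ := hne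
      omega
    refine term_vge hp.out.ne_zero (by omega) 2 (vsc_weak i) ?_
    have hJ := J3 hp.out hp5 hj3
    rw [padicValNat.self hp.out.one_lt]
    simp only [Nat.cast_one, mul_one]
    omega

lemma mod_inv_aux {c d : ℕ} (hcd : (c * d) % p = 1 % p) (a : ℕ) (ha : a < p) :
    (c * ((d * a) % p)) % p = a := by
  have h1 : c * ((d * a) % p) ≡ c * (d * a) [MOD p] :=
    Nat.ModEq.mul_left c (Nat.mod_modEq _ p)
  have h3 : (c * d) * a ≡ 1 * a [MOD p] := Nat.ModEq.mul_right a hcd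
  have h4 : c * ((d * a) % p) ≡ a [MOD p] := by
    refine h1.trans ?_
    rw [show c * (d * a) = (c * d) * a from by ring]
    simpa using h3
  have h5 := h4
  unfold Nat.ModEq at h5
  rwa [Nat.mod_eq_of_lt ha] at h5

/-- doubling is a bijection on residues: `∑_{i<p} ((2i) mod p)^n = ∑_{i<p} i^n`. -/
lemma double_bij (hp5 : 5 ≤ p) (n : ℕ) :
    ∑ i ∈ range p, ((2 * i) % p) ^ n = ∑ i ∈ range p, i ^ n := by
  have hodd : p % 2 = 1 := by
    obtain ⟨k, hk⟩ := hp.out.odd_of_ne_two (by omega)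
    omega
  set h := (p + 1) / 2 with hdef
  have hh : 2 * h = p + 1 := by omega
  have hinv1 : (h * 2) % p = 1 % p := by
    rw [show h * 2 = p + 1 from by omega]
    exact Nat.add_mod_left p 1
  have hinv2 : (2 * h) % p = 1 % p := by
    rw [hh]; exact Nat.add_mod_left p 1
  refine Finset.sum_nbij' (i := fun a => (2 * a) % p) (j := fun a => (h * a) % p)
    (fun a ha => by rw [mem_range] at *; exact Nat.mod_lt _ (by omega))
    (fun a ha => by rw [mem_range] at *; exact Nat.mod_lt _ (by omega))
    (fun a ha => by rw [mem_range] at ha; exact mod_inv_aux hinv1 a ha)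
    (fun a ha => by rw [mem_range] at ha; exact mod_inv_aux hinv2 a ha)
    (fun a _ => rfl)

/-- binomial congruence : `(a - q)^(k+1) ≡ a^(k+1) - (k+1) a^k q  mod q²`. -/
lemma pow_sub_cong (a q : ℤ) : ∀ k : ℕ,
    q ^ 2 ∣ (a - q) ^ (k + 1) - (a ^ (k + 1) - (k + 1) * a ^ k * q) := by
  intro k
  induction k with
  | zero => simp [pow_one]
  | succ k ih =>
    obtain ⟨t, ht⟩ := ih
    refine ⟨(a - q) * t + ((k : ℤ) + 1) * a ^ k, ?_⟩
    push_cast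
    linear_combination (a - q) * ht

/-- the crucial integer congruence:
`(2^n - 1) S_n(p) ≡ n 2^(n-1) p W  (mod p²)`. -/
lemma step2 (hp5 : 5 ≤ p) {n : ℕ} (hn1 : 1 ≤ n) :
    (p : ℤ) ^ 2 ∣ (2 ^ n - 1) * (SqNat p n : ℤ) -
      (n : ℤ) * 2 ^ (n - 1) * p *
        (∑ i ∈ range p, if p < 2 * i then ((i : ℤ)) ^ (n - 1) else 0) := by
  have hodd : p % 2 = 1 := by
    obtain ⟨k, hk⟩ := hp.out.odd_of_ne_two (by omega); omega
  have key : ∀ i ∈ range p, (p : ℤ) ^ 2 ∣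
      (((2 * i % p : ℕ) : ℤ) ^ n -
        ((2 * (i : ℤ)) ^ n -
          (n : ℤ) * (2 * (i : ℤ)) ^ (n - 1) * p * (if p < 2 * i then 1 else 0))) := by
    intro i hi
    rw [mem_range] at hi
    by_cases hpi : p < 2 * i
    · rw [if_pos hpi, mul_one]
      have hcast : ((2 * i % p : ℕ) : ℤ) = 2 * (i : ℤ) - p := by
        have h1 : 2 * i % p = 2 * i - p := by
          rw [Nat.mod_eq_sub_mod (by omega)]
          exact Nat.mod_eq_of_lt (by omega)
        rw [h1, Nat.cast_sub (by omega : p ≤ 2 * i)]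
        push_cast
        ring
      rw [hcast]
      have hcong := pow_sub_cong (2 * (i : ℤ)) (p : ℤ) (n - 1)
      rw [show n - 1 + 1 = n from by omega] at hcong
      have hn' : ((n - 1 : ℕ) : ℤ) + 1 = (n : ℤ) := by
        rw [Nat.cast_sub (by omega : 1 ≤ n)]
        ring
      rw [hn'] at hcong
      exact hcong
    · rw [if_neg hpi, mul_zero, sub_zero]
      have h1 : 2 * i % p = 2 * i := Nat.mod_eq_of_lt (by omega)
      rw [h1]
      push_cast
      simp
  have hsum := Finset.dvd_sum key
  have hS1 : ∑ i ∈ range p, ((2 * i % p : ℕ) : ℤ) ^ n = (SqNat p n : ℤ) := by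
    have h := double_bij (p := p) hp5 n
    unfold SqNat
    exact_mod_cast congrArg (fun t : ℕ => (t : ℤ)) h
  have hS2 : ∑ i ∈ range p, (2 * (i : ℤ)) ^ n = 2 ^ n * (SqNat p n : ℤ) := by
    rw [show ((SqNat p n : ℤ)) = ∑ i ∈ range p, (i : ℤ) ^ n from by unfold SqNat; push_cast; ring]
    rw [Finset.mul_sum]
    exact Finset.sum_congr rfl fun i _ => by rw [mul_pow]
  have hS3 : ∑ i ∈ range p,
      (n : ℤ) * (2 * (i : ℤ)) ^ (n - 1) * p * (if p < 2 * i then 1 else 0)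
      = (n : ℤ) * 2 ^ (n - 1) * p *
        (∑ i ∈ range p, if p < 2 * i then ((i : ℤ)) ^ (n - 1) else 0) := by
    rw [Finset.mul_sum]
    refine Finset.sum_congr rfl fun i _ => ?_
    by_cases hpi : p < 2 * i
    · rw [if_pos hpi, if_pos hpi, mul_pow]; ring
    · rw [if_neg hpi, if_neg hpi]; ring
  have heq : (∑ i ∈ range p, (((2 * i % p : ℕ) : ℤ) ^ n -
        ((2 * (i : ℤ)) ^ n -
          (n : ℤ) * (2 * (i : ℤ)) ^ (n - 1) * p * (if p < 2 * i then 1 else 0))))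
      = (SqNat p n : ℤ) - (2 ^ n * (SqNat p n : ℤ) -
          (n : ℤ) * 2 ^ (n - 1) * p *
            (∑ i ∈ range p, if p < 2 * i then ((i : ℤ)) ^ (n - 1) else 0)) := by
    rw [Finset.sum_sub_distrib, Finset.sum_sub_distrib, hS1, hS2, hS3]
  rw [heq] at hsum
  have hfin : (2 ^ n - 1) * (SqNat p n : ℤ) -
      (n : ℤ) * 2 ^ (n - 1) * p *
        (∑ i ∈ range p, if p < 2 * i then ((i : ℤ)) ^ (n - 1) else 0)
      = -((SqNat p n : ℤ) - (2 ^ n * (SqNat p n : ℤ) -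
          (n : ℤ) * 2 ^ (n - 1) * p *
            (∑ i ∈ range p, if p < 2 * i then ((i : ℤ)) ^ (n - 1) else 0))) := by
    ring
  rw [hfin]
  exact dvd_neg.2 hsum

/-- Step 3 : `8·W ≡ 1 (mod p)` where `W = ∑_{p/2<i<p} i^(n-1)` and `(p-1) ∣ (n-2)`. -/
lemma step3 (hp5 : 5 ≤ p) {n : ℕ} (hn2 : 2 ≤ n) (hd2 : (p - 1) ∣ (n - 2)) :
    ((8 : ZMod p)) * ((∑ i ∈ range p, if p < 2 * i then ((i : ℤ)) ^ (n - 1) else 0 : ℤ) : ZMod p)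
      = 1 := by
  have hodd : p % 2 = 1 := by
    obtain ⟨k, hk⟩ := hp.out.odd_of_ne_two (by omega); omega
  set h := (p + 1) / 2 with hdef
  have hh : 2 * h = p + 1 := by omega
  obtain ⟨d, hd⟩ := hd2
  -- reduce the powers mod p : `i^(n-1) ≡ i` for `0 < i < p`
  have hW : ((∑ i ∈ range p, if p < 2 * i then ((i : ℤ)) ^ (n - 1) else 0 : ℤ) : ZMod p)
      = ((∑ i ∈ range p, if p < 2 * i then i else 0 : ℕ) : ZMod p) := by
    push_cast
    refine Finset.sum_congr rfl fun i hi => ?_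
    rw [mem_range] at hi
    by_cases hpi : p < 2 * i
    · rw [if_pos hpi, if_pos hpi]
      have hx0 : ((i : ZMod p)) ≠ 0 := by
        intro hx
        rw [ZMod.natCast_eq_zero_iff] at hx
        have := Nat.le_of_dvd (by omega) hx
        omega
      have hexp : n - 1 = (p - 1) * d + 1 := by rw [← hd]; omega
      rw [hexp, pow_add, pow_mul, ZMod.pow_card_sub_one_eq_one hx0, one_pow, one_mul, pow_one]
    · rw [if_neg hpi, if_neg hpi]
  rw [hW]
  -- evaluate the natural number sum
  set N : ℕ := ∑ i ∈ range p, if p < 2 * i then i else 0 with hNdef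
  have hNf : N = ∑ i ∈ Finset.Ico h p, i := by
    rw [hNdef, ← Finset.sum_filter]
    congr 1
    ext x
    simp only [Finset.mem_filter, Finset.mem_range, Finset.mem_Ico]
    omega
  set A : ℕ := ∑ i ∈ range h, i with hAdef
  set C : ℕ := ∑ i ∈ range p, i with hCdef
  have hABC : A + N = C := by
    rw [hNf, hAdef, hCdef, Finset.range_eq_Ico, Finset.range_eq_Ico]
    exact Finset.sum_Ico_consecutive (fun i : ℕ => i) (by omega : 0 ≤ h) (by omega : h ≤ p)
  have hA2 : A * 2 = h * (h - 1) := Finset.sum_range_id_mul_two h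
  have hC2 : C * 2 = p * (p - 1) := Finset.sum_range_id_mul_two p
  -- pass to ℤ
  have hh' : 3 ≤ h := by omega
  have hA2' : (A : ℤ) * 2 = (h : ℤ) * ((h : ℤ) - 1) := by
    have := congrArg (fun t : ℕ => (t : ℤ)) hA2
    push_cast [Nat.cast_sub (by omega : 1 ≤ h)] at this
    linarith [this]
  have hC2' : (C : ℤ) * 2 = (p : ℤ) * ((p : ℤ) - 1) := by
    have := congrArg (fun t : ℕ => (t : ℤ)) hC2
    push_cast [Nat.cast_sub (by omega : 1 ≤ p)] at this
    linarith [this]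
  have hABC' : (A : ℤ) + (N : ℤ) = (C : ℤ) := by exact_mod_cast hABC
  have hhZ : 2 * (h : ℤ) = (p : ℤ) + 1 := by exact_mod_cast hh
  have h8 : 8 * (N : ℤ) = 4 * (p : ℤ) * ((p : ℤ) - 1) - ((p : ℤ) * (p : ℤ) - 1) := by
    linear_combination 4 * hC2' - 4 * hA2' + 8 * hABC' - (2 * (h : ℤ) + (p : ℤ) - 1) * hhZ
  -- now conclude in `ZMod p`
  have hcast := congrArg (fun t : ℤ => ((t : ZMod p))) h8
  push_cast at hcast
  rw [ZMod.natCast_self] at hcast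
  rw [show ((8 : ZMod p)) * ((N : ℕ) : ZMod p) = 8 * ((N : ℕ) : ZMod p) from rfl]
  rw [show ((N : ℕ) : ZMod p) = (((N : ℤ) : ZMod p)) from by push_cast; rfl]
  rw [show (8 : ZMod p) * (((N : ℤ)) : ZMod p) = (((8 * (N : ℤ) : ℤ)) : ZMod p) from by push_cast; ring]
  rw [h8]
  push_cast
  rw [ZMod.natCast_self]
  ring

lemma vge_of_int_pow_dvd {k : ℕ} {z : ℤ} (h : (p : ℤ) ^ k ∣ z) : VGE p k ((z : ℚ)) := by
  rcases eq_or_ne z 0 with rfl | hz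
  · simp [vge_zero]
  · refine Or.inr ?_
    rw [padicValRat.of_int]
    rcases (padicValInt_dvd_iff k z).1 h with h' | h'
    · exact absurd h' hz
    · exact_mod_cast h'

lemma int_dvd_of_vge {z : ℤ} (h : VGE p 1 ((z : ℚ))) : (p : ℤ) ∣ z := by
  rcases h with h | h
  · have : z = 0 := by exact_mod_cast h
    simp [this]
  · rw [padicValRat.of_int] at h
    have h1 : (p : ℤ) ^ 1 ∣ z := (padicValInt_dvd_iff 1 z).2 (Or.inr (by exact_mod_cast h))
    simpa using h1

/-- the Kummer-congruence consequence : for `p ≥ 5`, `(p-1) ∣ n-2`, `p ∤ n`,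
the Bernoulli number `B_n` is not divisible by `p`. -/
lemma kummer {n : ℕ} (hp5 : 5 ≤ p) (hn6 : 6 ≤ n) (hne : Even n)
    (hd2 : (p - 1) ∣ (n - 2)) (hpn : ¬ (p ∣ n)) :
    ¬ ((1 : ℤ) ≤ padicValRat p (bernoulli n)) := by
  intro hge
  set W : ℤ := ∑ i ∈ range p, if p < 2 * i then ((i : ℤ)) ^ (n - 1) else 0 with hWdef
  have hfp := faul_p (p := p) n
  have htail := kummer_tail (p := p) hp5 hn6 hne
  have h1 : VGE p 2 ((SqNat p n : ℚ) - bernoulli n * p) := by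
    have heq : (SqNat p n : ℚ) - bernoulli n * p = ∑ i ∈ range n, term p n i := by
      rw [hfp]; ring
    rw [heq]; exact htail
  have h2 : VGE p 2 (((2 ^ n - 1 : ℤ) : ℚ) * ((SqNat p n : ℚ) - bernoulli n * p)) :=
    vge_mono (by omega) (vge_mul (vge_int _) h1)
  have h3 : VGE p 2 ((((2 ^ n - 1) * (SqNat p n : ℤ) - (n : ℤ) * 2 ^ (n - 1) * p * W : ℤ)) : ℚ) :=
    vge_of_int_pow_dvd (step2 hp5 (by omega))
  have h4 : VGE p 2 ((((2 ^ n - 1 : ℤ) : ℚ) * bernoulli n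
      - (((n : ℤ) * 2 ^ (n - 1) * W : ℤ) : ℚ)) * p) := by
    have heq : (((2 ^ n - 1 : ℤ) : ℚ) * bernoulli n
        - (((n : ℤ) * 2 ^ (n - 1) * W : ℤ) : ℚ)) * p
        = -(((2 ^ n - 1 : ℤ) : ℚ) * ((SqNat p n : ℚ) - bernoulli n * p))
          + ((((2 ^ n - 1) * (SqNat p n : ℤ) - (n : ℤ) * 2 ^ (n - 1) * p * W : ℤ)) : ℚ) := by
      push_cast
      ring
    rw [heq]
    exact vge_add (vge_neg h2) h3
  have h5 : VGE p 1 (((2 ^ n - 1 : ℤ) : ℚ) * bernoulli n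
      - (((n : ℤ) * 2 ^ (n - 1) * W : ℤ) : ℚ)) :=
    vge_mono (by norm_num) (vge_of_mul_p h4)
  have h6 : VGE p 1 (((2 ^ n - 1 : ℤ) : ℚ) * bernoulli n) :=
    vge_mono (by omega) (vge_mul (vge_int _) (Or.inr hge))
  have h7 : VGE p 1 ((((n : ℤ) * 2 ^ (n - 1) * W : ℤ)) : ℚ) := by
    have heq : (((n : ℤ) * 2 ^ (n - 1) * W : ℤ) : ℚ)
        = ((2 ^ n - 1 : ℤ) : ℚ) * bernoulli n
          - (((2 ^ n - 1 : ℤ) : ℚ) * bernoulli n - (((n : ℤ) * 2 ^ (n - 1) * W : ℤ) : ℚ)) := by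
      ring
    rw [heq]
    exact vge_sub h6 h5
  have h8 : (p : ℤ) ∣ (n : ℤ) * 2 ^ (n - 1) * W := int_dvd_of_vge h7
  have hprime : Prime ((p : ℤ)) := Nat.prime_iff_prime_int.1 hp.out
  have hpW : (p : ℤ) ∣ W := by
    rcases hprime.dvd_mul.1 h8 with hcase | hcase
    · rcases hprime.dvd_mul.1 hcase with hc | hc
      · exact absurd (by exact_mod_cast hc) hpn
      · have h2d : (p : ℤ) ∣ 2 := hprime.dvd_of_dvd_pow hc
        have : (p : ℕ) ∣ 2 := by exact_mod_cast h2d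
        have := Nat.le_of_dvd (by norm_num) this
        omega
    · exact hcase
  have hW0 : ((W : ZMod p)) = 0 := by
    rw [ZMod.intCast_zmod_eq_zero_iff_dvd]
    exact_mod_cast hpW
  have hW8 := step3 hp5 (by omega) hd2
  rw [← hWdef] at hW8
  rw [hW0, mul_zero] at hW8
  exact zero_ne_one hW8

end CubeAux
namespace CubeAux

variable {p : ℕ} [hp : Fact p.Prime]

lemma faul_m (m n : ℕ) (hn6 : 6 ≤ n) (hne : Even n) :
    ∑ k ∈ range m, (k : ℚ) ^ n
      = (∑ i ∈ range (n - 2), term m n i)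
        + bernoulli (n - 2) * (n.choose 2 : ℚ) * (m : ℚ) ^ 3 / 3
        + bernoulli n * m := by
  rw [faul m n, show n + 1 = (n - 2) + 1 + 1 + 1 from by omega,
    Finset.sum_range_succ, Finset.sum_range_succ, Finset.sum_range_succ,
    show n - 2 + 1 + 1 = n from by omega, show n - 2 + 1 = n - 1 from by omega, term_self]
  have hz : term m n (n - 1) = 0 := by
    unfold term
    obtain ⟨b, hb⟩ := hne
    rw [bern_odd_zero ⟨b - 1, by omega⟩ (by omega)]
    simp
  have ht : term m n (n - 2) = bernoulli (n - 2) * (n.choose 2 : ℚ) * (m : ℚ) ^ 3 / 3 := by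
    unfold term
    rw [show n + 1 - (n - 2) = 3 from by omega, Nat.choose_symm (by omega : 2 ≤ n)]
    norm_num
  rw [hz, ht]
  ring

lemma main_tail {n m : ℕ} (hn6 : 6 ≤ n) (hne : Even n) (hm : m ≠ 0) (hpm : p ∣ m) :
    VGE p (3 * (padicValNat p m : ℤ)) (∑ i ∈ range (n - 2), term m n i) := by
  have hv1 : 1 ≤ padicValNat p m :=
    one_le_padicValNat_of_dvd hm hpm
  set v : ℤ := (padicValNat p m : ℤ) with hvdef
  have hv1' : 1 ≤ v := by rw [hvdef]; exact_mod_cast hv1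
  refine vge_sum fun i hi => ?_
  rw [mem_range] at hi
  by_cases hB0 : bernoulli i = 0
  · simp [term, hB0, vge_zero]
  by_cases hi1 : i = 1
  · subst hi1
    have hterm : term m n 1 = bernoulli 1 * (m : ℚ) ^ n := by
      unfold term
      have hn0 : ((n : ℚ)) ≠ 0 := by exact_mod_cast (by omega : n ≠ 0)
      rw [Nat.choose_one_right, show n + 1 - 1 = n from by omega]
      field_simp
    rw [hterm]
    have hmul := vge_mul (p := p) vge_B1 (vge_N_pow m hm n)
    refine vge_mono ?_ hmul
    have hn6' : (6 : ℤ) ≤ (n : ℤ) := by exact_mod_cast hn6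
    nlinarith
  · have hEven : Even i := by
      rcases Nat.even_or_odd i with h | h
      · exact h
      · rcases Nat.lt_or_ge i 2 with h2' | h2'
        · interval_cases i
          · exact Even.zero
          · exact absurd rfl hi1
        · exact absurd (bern_odd_zero h (by omega)) hB0
    have hj4 : 4 ≤ n + 1 - i := by omega
    have hnot : ¬ (p = 2 ∧ n + 1 - i = 4) := by
      rintro ⟨-, hj⟩
      obtain ⟨a, ha⟩ := hEven
      obtain ⟨b, hb⟩ := hne
      omega
    have hJ := J4 hp.out hj4 hnot
    refine term_vge hm (by omega) (3 * v) (vsc_weak i) ?_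
    have hJ' : ((padicValNat p (n + 1 - i)) : ℤ) ≤ ((n + 1 - i : ℕ) : ℤ) - 4 := by
      exact_mod_cast (by omega : padicValNat p (n + 1 - i) ≤ (n + 1 - i) - 4)
    have hj4' : (4 : ℤ) ≤ ((n + 1 - i : ℕ) : ℤ) := by exact_mod_cast hj4
    have hfac : (0 : ℤ) ≤ (((n + 1 - i : ℕ) : ℤ) - 3) * (v - 1) :=
      mul_nonneg (by omega) (by omega)
    nlinarith

/-- the per-prime equivalence, for `n ≥ 6` even. -/
lemma key_equiv {n m : ℕ} (hn6 : 6 ≤ n) (hne : Even n) (hm : 2 ≤ m) (hpm : p ∣ m) :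
    ((3 * (padicValNat p m : ℤ)) ≤ padicValRat p (∑ k ∈ range m, (k : ℚ) ^ n))
      ↔ ((2 * (padicValNat p m : ℤ)) ≤ padicValRat p (bernoulli n)) := by
  have hm0 : m ≠ 0 := by omega
  have hmQ : ((m : ℚ)) ≠ 0 := by exact_mod_cast hm0
  have hv1 : 1 ≤ padicValNat p m :=
    one_le_padicValNat_of_dvd hm0 hpm
  set v : ℤ := (padicValNat p m : ℤ) with hvdef
  have hv1' : 1 ≤ v := by rw [hvdef]; exact_mod_cast hv1
  have hfm := faul_m m n hn6 hne
  set T : ℚ := ∑ i ∈ range (n - 2), term m n i with hTdef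
  set E : ℚ := bernoulli (n - 2) * (n.choose 2 : ℚ) * (m : ℚ) ^ 3 / 3 with hEdef
  have hT : VGE p (3 * v) T := main_tail hn6 hne hm0 hpm
  have hBn0 : bernoulli n ≠ 0 := bern_ne_zero (by omega) hne
  have hBm0 : bernoulli n * (m : ℚ) ≠ 0 := mul_ne_zero hBn0 hmQ
  have hvBm : padicValRat p (bernoulli n * m) = padicValRat p (bernoulli n) + v := by
    rw [padicValRat.mul hBn0 hmQ, val_nat (p := p) m hm0]
  have hSq0 : (∑ k ∈ range m, (k : ℚ) ^ n) ≠ 0 := by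
    rw [← sqNat_cast]
    exact_mod_cast (sqNat_pos hm n).ne'
  -- valuation bound for `E` using only the weak von Staudt–Clausen bound
  have hEweak : VGE p (3 * v - 2) E := by
    rw [hEdef]
    have h1 := vge_mul (p := p) (vsc_weak (n - 2)) (vge_nat (n.choose 2))
    have h2 := vge_mul (p := p) h1 (vge_N_pow m hm0 3)
    have h3 := vge_div_nat (p := p) h2 3 (by norm_num)
    have hval3 : padicValNat p 3 ≤ 1 := by
      by_cases hp3 : p = 3
      · subst hp3; rw [padicValNat.self (by norm_num)]
      · rw [padicValNat.eq_zero_of_not_dvd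
          (fun hd => hp3 ((Nat.prime_dvd_prime_iff_eq hp.out (by norm_num)).1 hd))]
        omega
    refine vge_mono ?_ h3
    omega
  by_cases hdn : (p - 1) ∣ n
  · -- Case 1 : `v_p(B_n) = -1` and both sides fail.
    have hval := (vsc_dvd (p := p) (by omega) hne hdn).2
    have hRHS : ¬ (2 * v ≤ padicValRat p (bernoulli n)) := by rw [hval]; omega
    have hdom : padicValRat p (bernoulli n * m) < 3 * v - 2 := by
      rw [hvBm, hval]; omega
    have hTE : VGE p (3 * v - 2) (T + E) := vge_add (vge_mono (by omega) hT) hEweak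
    obtain ⟨hne0, heq⟩ := val_add_eq (p := p) hBm0 hTE hdom
    have hsplit : (∑ k ∈ range m, (k : ℚ) ^ n) = bernoulli n * m + (T + E) := by
      rw [hfm]; ring
    have hLHS : padicValRat p (∑ k ∈ range m, (k : ℚ) ^ n) = v - 1 := by
      rw [hsplit, heq, hvBm, hval]
      omega
    rw [hLHS]
    constructor
    · intro h; omega
    · intro h; exact absurd h hRHS
  · -- now `p ≥ 5` and `v_p(B_n) ≥ 0`
    have hp5 : 5 ≤ p := by
      by_contra hlt
      have h2 : 2 ≤ p := hp.out.two_le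
      interval_cases p
      · exact hdn (by norm_num)
      · exact hdn (by simpa using hne.two_dvd)
      · exact absurd hp.out (by norm_num)
    have hge0 : VGE p 0 (bernoulli n) := vsc_ndvd (by omega) hdn
    have hvB0 : 0 ≤ padicValRat p (bernoulli n) := by
      rcases hge0 with h | h
      · exact absurd h hBn0
      · exact h
    have hval3 : padicValNat p 3 = 0 := padicValNat.eq_zero_of_not_dvd
      (fun hd => by have := Nat.le_of_dvd (by norm_num) hd; omega)
    -- refined bound on `E` for `p ≥ 5`
    have hE1 : VGE p (3 * v - 1) E := by
      rw [hEdef]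
      have h1 := vge_mul (p := p) (vsc_weak (n - 2)) (vge_nat (n.choose 2))
      have h2 := vge_mul (p := p) h1 (vge_N_pow m hm0 3)
      have h3 := vge_div_nat (p := p) h2 3 (by norm_num)
      refine vge_mono ?_ h3
      rw [hval3]
      omega
    by_cases hcaseA : ¬ ((p - 1) ∣ (n - 2)) ∨ p ∣ n.choose 2
    · -- Case 2a : `v_p(E) ≥ 3v`, clean equivalence
      have hE : VGE p (3 * v) E := by
        rw [hEdef]
        have hc0 : n.choose 2 ≠ 0 := (Nat.choose_pos (by omega : 2 ≤ n)).ne'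
        have hBC : VGE p (-1 + 1) (bernoulli (n - 2) * (n.choose 2 : ℚ)) ∨
            VGE p (0 + 0) (bernoulli (n - 2) * (n.choose 2 : ℚ)) := by
          rcases hcaseA with h | h
          · exact Or.inr (vge_mul (vsc_ndvd (by omega) h) (vge_nat _))
          · refine Or.inl (vge_mul (vsc_weak _) (Or.inr ?_))
            rw [val_nat (p := p) _ hc0]
            exact_mod_cast one_le_padicValNat_of_dvd hc0 h
        have hBC' : VGE p 0 (bernoulli (n - 2) * (n.choose 2 : ℚ)) := by
          rcases hBC with h | h
          · exact vge_mono (by omega) h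
          · exact vge_mono (by omega) h
        have h2 := vge_mul (p := p) hBC' (vge_N_pow m hm0 3)
        have h3 := vge_div_nat (p := p) h2 3 (by norm_num)
        refine vge_mono ?_ h3
        rw [hval3]
        omega
      have hTE : VGE p (3 * v) (T + E) := vge_add hT hE
      constructor
      · intro h
        have hBm : VGE p (3 * v) (bernoulli n * m) := by
          have heq : bernoulli n * (m : ℚ) = (∑ k ∈ range m, (k : ℚ) ^ n) - (T + E) := by
            rw [hfm]; ring
          rw [heq]
          exact vge_sub (Or.inr h) hTE
        rcases hBm with h' | h'
        · exact absurd h' hBm0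
        · rw [hvBm] at h'; omega
      · intro h
        have hBm : VGE p (3 * v) (bernoulli n * (m : ℚ)) := Or.inr (by rw [hvBm]; omega)
        have heq : (∑ k ∈ range m, (k : ℚ) ^ n) = (T + E) + bernoulli n * m := by
          rw [hfm]
        have hall := vge_add hTE hBm
        rw [← heq] at hall
        rcases hall with h' | h'
        · exact absurd h' hSq0
        · exact h'
    · -- Case 2b : Kummer case, both sides fail
      push_neg at hcaseA
      obtain ⟨hd2, hnc⟩ := hcaseA
      have hpn : ¬ p ∣ n := by
        intro hdvd
        apply hnc
        have h2d : 2 * n.choose 2 = n * (n - 1) := by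
          rw [Nat.choose_two_right]
          exact Nat.mul_div_cancel' (dvd_mul_of_dvd_left hne.two_dvd _)
        have hpd : p ∣ 2 * n.choose 2 := by
          rw [h2d]; exact Dvd.dvd.mul_right hdvd _
        rcases (Nat.Prime.dvd_mul hp.out).1 hpd with h | h
        · have := Nat.le_of_dvd (by norm_num) h; omega
        · exact h
      have hkum := kummer hp5 hn6 hne hd2 hpn
      have hvB : padicValRat p (bernoulli n) = 0 := le_antisymm (by omega) hvB0
      have hTE : VGE p (v + 1) (T + E) :=
        vge_add (vge_mono (by omega) hT) (vge_mono (by omega) hE1)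
      have hdom : padicValRat p (bernoulli n * m) < v + 1 := by rw [hvBm, hvB]; omega
      obtain ⟨hne0, heq⟩ := val_add_eq (p := p) hBm0 hTE hdom
      have hsplit : (∑ k ∈ range m, (k : ℚ) ^ n) = bernoulli n * m + (T + E) := by
        rw [hfm]; ring
      have hLHS : padicValRat p (∑ k ∈ range m, (k : ℚ) ^ n) = v := by
        rw [hsplit, heq, hvBm, hvB]
        omega
      rw [hLHS, hvB]
      constructor
      · intro h; omega
      · intro h; omega

end CubeAux
namespace CubeAux

lemma sum_sq_identity (m : ℕ) :
    6 * (∑ ν ∈ Finset.range m, (ν : ℤ) ^ 2) = 2 * (m : ℤ) ^ 3 - 3 * (m : ℤ) ^ 2 + m := by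
  induction m with
  | zero => simp
  | succ k ih =>
    rw [Finset.sum_range_succ]
    push_cast
    push_cast at ih
    linear_combination ih

lemma sum_quar_identity (m : ℕ) :
    30 * (∑ ν ∈ Finset.range m, (ν : ℤ) ^ 4)
      = 6 * (m : ℤ) ^ 5 - 15 * (m : ℤ) ^ 4 + 10 * (m : ℤ) ^ 3 - m := by
  induction m with
  | zero => simp
  | succ k ih =>
    rw [Finset.sum_range_succ]
    push_cast
    push_cast at ih
    linear_combination ih

lemma bernoulli_two_val : bernoulli 2 = 1 / 6 := by
  rw [bernoulli_eq_bernoulli'_of_ne_one (by norm_num), bernoulli'_two]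

lemma bernoulli_four_val : bernoulli 4 = -1 / 30 := by
  rw [bernoulli_eq_bernoulli'_of_ne_one (by norm_num), bernoulli'_four]

lemma val_one_div_nat (p D : ℕ) [Fact p.Prime] (hD : D ≠ 0) :
    padicValRat p (1 / (D : ℚ)) ≤ 0 := by
  rw [padicValRat.div one_ne_zero (by exact_mod_cast hD), padicValRat.one,
    val_nat (p := p) D hD]
  omega

lemma rhs_fails {m : ℕ} (hm : 2 ≤ m) (x : ℚ) (hx : ∀ p : ℕ, p.Prime → padicValRat p x ≤ 0) :
    ¬ (∀ p : ℕ, p.Prime → p ∣ m → (2 * padicValNat p m : ℤ) ≤ padicValRat p x) := by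
  intro hall
  set p := m.minFac with hpdef
  have hpp : p.Prime := Nat.minFac_prime (by omega)
  haveI : Fact p.Prime := ⟨hpp⟩
  have hpm : p ∣ m := Nat.minFac_dvd m
  have h1 := hall p hpp hpm
  have hv1 : 1 ≤ padicValNat p m := one_le_padicValNat_of_dvd (by omega) hpm
  have h2 := hx p hpp
  omega

lemma lhs_fails_two {m : ℕ} (hm : 2 ≤ m) :
    ¬ ((m : ℤ) ^ 3 ∣ ∑ ν ∈ Finset.range m, (ν : ℤ) ^ 2) := by
  intro h
  have h6 : (m : ℤ) ^ 3 ∣ 6 * ∑ ν ∈ Finset.range m, (ν : ℤ) ^ 2 := Dvd.dvd.mul_left h 6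
  rw [sum_sq_identity] at h6
  have h2 : (m : ℤ) * (m : ℤ) ^ 2 ∣ (m : ℤ) * (1 - 3 * m) := by
    have heq : (2 * (m : ℤ) ^ 3 - 3 * (m : ℤ) ^ 2 + m) - 2 * (m : ℤ) ^ 3
        = (m : ℤ) * (1 - 3 * m) := by ring
    have hd := dvd_sub h6 (Dvd.dvd.mul_left dvd_rfl 2)
    rw [heq] at hd
    rwa [show (m : ℤ) ^ 3 = m * m ^ 2 from by ring] at hd
  have hm0 : (m : ℤ) ≠ 0 := by exact_mod_cast (by omega : m ≠ 0)
  have h4 : (m : ℤ) ^ 2 ∣ 1 - 3 * m := (mul_dvd_mul_iff_left hm0).1 h2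
  have h5 : (m : ℤ) ∣ 1 - 3 * m := dvd_trans (dvd_pow_self _ (by norm_num : 2 ≠ 0)) h4
  have h7 : (m : ℤ) ∣ 1 := by
    have h8 := dvd_add h5 ((dvd_refl (m : ℤ)).mul_left 3)
    rwa [sub_add_cancel] at h8
  have := Int.le_of_dvd one_pos h7
  omega

lemma lhs_fails_four {m : ℕ} (hm : 2 ≤ m) :
    ¬ ((m : ℤ) ^ 3 ∣ ∑ ν ∈ Finset.range m, (ν : ℤ) ^ 4) := by
  intro h
  have h30 : (m : ℤ) ^ 3 ∣ 30 * ∑ ν ∈ Finset.range m, (ν : ℤ) ^ 4 := Dvd.dvd.mul_left h 30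
  rw [sum_quar_identity] at h30
  have hpoly : (m : ℤ) ^ 3 ∣ 6 * (m : ℤ) ^ 5 - 15 * (m : ℤ) ^ 4 + 10 * (m : ℤ) ^ 3 :=
    ⟨6 * (m : ℤ) ^ 2 - 15 * m + 10, by ring⟩
  have hdm : (m : ℤ) ^ 3 ∣ (m : ℤ) := by
    have hd := dvd_sub hpoly h30
    have heq : (6 * (m : ℤ) ^ 5 - 15 * (m : ℤ) ^ 4 + 10 * (m : ℤ) ^ 3)
        - (6 * (m : ℤ) ^ 5 - 15 * (m : ℤ) ^ 4 + 10 * (m : ℤ) ^ 3 - m) = m := by ring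
    rwa [heq] at hd
  have hle := Int.le_of_dvd (by exact_mod_cast (by omega : 0 < m)) hdm
  have hm' : (2 : ℤ) ≤ (m : ℤ) := by exact_mod_cast hm
  have hkey : 0 ≤ ((m : ℤ) - 2) * m * ((m : ℤ) + 2) :=
    mul_nonneg (mul_nonneg (by omega) (by omega)) (by omega)
  nlinarith [hkey]

lemma dvd_iff_vals {m n : ℕ} (hm : 2 ≤ m) :
    ((m : ℤ) ^ 3 ∣ ∑ ν ∈ Finset.range m, (ν : ℤ) ^ n)
      ↔ ∀ p : ℕ, p.Prime → p ∣ m →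
          (3 * (padicValNat p m : ℤ)) ≤ padicValRat p (∑ k ∈ range m, (k : ℚ) ^ n) := by
  have hSpos : 0 < SqNat m n := sqNat_pos hm n
  have hZ : (∑ ν ∈ Finset.range m, (ν : ℤ) ^ n) = ((SqNat m n : ℕ) : ℤ) := by
    unfold SqNat; push_cast; ring
  have hQ : (∑ k ∈ range m, (k : ℚ) ^ n) = ((SqNat m n : ℕ) : ℚ) := (sqNat_cast m n).symm
  rw [hZ, hQ]
  constructor
  · intro h p hpp hpm
    haveI : Fact p.Prime := ⟨hpp⟩
    rw [val_nat (p := p) _ hSpos.ne']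
    have h0 : p ^ padicValNat p m ∣ m := pow_padicValNat_dvd
    have h2 : (p ^ padicValNat p m) ^ 3 ∣ m ^ 3 := pow_dvd_pow_of_dvd h0 3
    rw [← pow_mul, mul_comm] at h2
    have h3 : ((p ^ (3 * padicValNat p m) : ℕ) : ℤ) ∣ ((SqNat m n : ℕ) : ℤ) := by
      refine dvd_trans ?_ h
      have := Int.natCast_dvd_natCast.2 h2
      push_cast at this ⊢
      exact this
    rw [Int.natCast_dvd_natCast] at h3
    have h4 := (padicValNat_dvd_iff_le hSpos.ne').1 h3
    exact_mod_cast h4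
  · intro hall
    have hm3 : m ^ 3 ≠ 0 := by positivity
    have hdvd : m ^ 3 ∣ SqNat m n := by
      rw [← Nat.factorization_le_iff_dvd hm3 hSpos.ne', Finsupp.le_def]
      intro q
      by_cases hq : q.Prime
      · by_cases hqm : q ∣ m
        · haveI : Fact q.Prime := ⟨hq⟩
          have h1 := hall q hq hqm
          rw [val_nat (p := q) _ hSpos.ne'] at h1
          rw [Nat.factorization_pow]
          simp only [Finsupp.smul_apply, smul_eq_mul]
          rw [Nat.factorization_def _ hq, Nat.factorization_def _ hq]
          exact_mod_cast h1
        · rw [Nat.factorization_pow]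
          simp only [Finsupp.smul_apply, smul_eq_mul]
          rw [Nat.factorization_eq_zero_of_not_dvd hqm]
          omega
      · simp [Nat.factorization_eq_zero_of_not_prime _ hq]
    have := Int.natCast_dvd_natCast.2 hdvd
    push_cast at this
    exact this

end CubeAux

open CubeAux Finset in
/-- `m³ ∣ S_n(m) ↔ m² ∣ B_n` (in the valuation sense) for even positive `n`. -/
theorem cube_dvd_power_sum_iff (n m : ℕ) (hn : 0 < n) (hne : Even n) (hm : 0 < m) :
    (m : ℤ) ^ 3 ∣ (∑ ν ∈ Finset.range m, (ν : ℤ) ^ n) ↔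
      ∀ p : ℕ, p.Prime → p ∣ m →
        (2 * padicValNat p m : ℤ) ≤ padicValRat p (bernoulli n) := by
  rcases eq_or_lt_of_le (show 1 ≤ m by omega) with rfl | hm2
  · -- m = 1
    constructor
    · intro _ p hpp hpm
      exact absurd (Nat.dvd_one.1 hpm) hpp.ne_one
    · intro _
      simp
  · have hm2' : 2 ≤ m := hm2
    rcases Nat.lt_or_ge n 6 with hn6 | hn6
    · -- n ∈ {2, 4}
      obtain ⟨b, hb⟩ := hne
      have hn24 : n = 2 ∨ n = 4 := by omega
      rcases hn24 with rfl | rfl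
      · constructor
        · intro h
          exact absurd h (lhs_fails_two hm2')
        · intro h
          exfalso
          refine rhs_fails hm2' (bernoulli 2) ?_ h
          intro p hpp
          haveI : Fact p.Prime := ⟨hpp⟩
          rw [bernoulli_two_val, show (1 / 6 : ℚ) = 1 / ((6 : ℕ) : ℚ) from by norm_num]
          exact val_one_div_nat p 6 (by norm_num)
      · constructor
        · intro h
          exact absurd h (lhs_fails_four hm2')
        · intro h
          exfalso
          refine rhs_fails hm2' (bernoulli 4) ?_ h
          intro p hpp
          haveI : Fact p.Prime := ⟨hpp⟩
          rw [bernoulli_four_val,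
            show (-1 / 30 : ℚ) = -(1 / ((30 : ℕ) : ℚ)) from by norm_num,
            padicValRat.neg]
          exact val_one_div_nat p 30 (by norm_num)
    · -- main case n ≥ 6
      rw [dvd_iff_vals hm2']
      constructor
      · intro h p hpp hpm
        haveI : Fact p.Prime := ⟨hpp⟩
        exact (key_equiv (p := p) hn6 hne hm2' hpm).1 (h p hpp hpm)
      · intro h p hpp hpm
        haveI : Fact p.Prime := ⟨hpp⟩
        exact (key_equiv (p := p) hn6 hne hm2' hpm).2 (h p hpp hpm)
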